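/- arXiv:0908.3772 — 2 statements merged into one kernel-verified Lean document; each statement's English description precedes it below -/
import Mathlib

section
/- Let F be a field of characteristic p > 0 equipped with a non-degenerate m-variate iterative derivation θ. Then there exist elements x_1,…,x_m ∈ F such that θ^{(e_i)}(x_j) = δ_{ij} (Kronecker delta) for all i,j ∈ {1,…,m}, where e_i ∈ ℕ^m is the i-th standard basis vector. -/
open scoped TensorProduct

/-- `binom(i+j, i)` for multi-indices: `∏ μ, (i μ + j μ).choose (i μ)`. -/
def multiChoose {m : ℕ} (i j : Fin m →₀ ℕ) : ℕ :=
  ∏ μ : Fin m, Nat.choose (i μ + j μ) (i μ)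

/-- An `m`-variate iterative derivation on a commutative ring `R`: a ring homomorphism
`θ : R → R[[T_1,…,T_m]]`, written `θ(r) = Σ_k θ^{(k)}(r)·T^k`, with `θ^{(0)} = id` and
`θ^{(i)} ∘ θ^{(j)} = binom(i+j,i)·θ^{(i+j)}` for all multi-indices `i, j`. -/
structure IterativeDerivation (m : ℕ) (R : Type*) [CommRing R] where
  toRingHom : R →+* MvPowerSeries (Fin m) R
  coeff_zero : ∀ r : R, MvPowerSeries.coeff (R := R) 0 (toRingHom r) = r
  iterate : ∀ (i j : Fin m →₀ ℕ) (r : R),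
    MvPowerSeries.coeff (R := R) i (toRingHom (MvPowerSeries.coeff (R := R) j (toRingHom r))) =
      multiChoose i j • MvPowerSeries.coeff (R := R) (i + j) (toRingHom r)

namespace IterativeDerivation

/-- The coefficient maps `θ^{(k)} : R → R` of an iterative derivation. -/
noncomputable def D {m : ℕ} {R : Type*} [CommRing R] (θ : IterativeDerivation m R)
    (k : Fin m →₀ ℕ) (r : R) : R :=
  MvPowerSeries.coeff (R := R) k (θ.toRingHom r)

end IterativeDerivation

/-- `θ` is non-degenerate if the `m` derivations `θ^{(e_1)},…,θ^{(e_m)}` are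
`F`-linearly independent as maps `F → F`. -/
def IterativeDerivation.Nondegenerate {m : ℕ} {F : Type*} [Field F]
    (θ : IterativeDerivation m F) : Prop :=
  LinearIndependent F (fun i : Fin m => (θ.D (Finsupp.single i 1) : F → F))


section DerivHelpers
variable {E : Type*} [Field E] (D : E → E)
variable (hadd : ∀ a b, D (a + b) = D a + D b)
variable (hmul : ∀ a b, D (a * b) = a * D b + b * D a)

include hadd in
lemma dzero : D 0 = 0 := by
  have h := hadd 0 0
  rw [add_zero] at h
  exact (left_eq_add.mp h)

include hmul in
lemma done : D 1 = 0 := by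
  have h := hmul 1 1
  rw [mul_one, one_mul] at h
  have : D 1 = D 1 + D 1 := by linear_combination h
  exact (left_eq_add.mp this)

include hadd in
lemma dneg (a : E) : D (-a) = -D a := by
  have h := hadd a (-a)
  rw [add_neg_cancel, dzero D hadd] at h
  linear_combination -h

include hadd in
lemma dsub (a b : E) : D (a - b) = D a - D b := by
  rw [sub_eq_add_neg, hadd, dneg D hadd, sub_eq_add_neg]

include hadd hmul in
lemma dnat (n : ℕ) : D (n : E) = 0 := by
  induction n with
  | zero => simpa using dzero D hadd
  | succ k ih => rw [Nat.cast_succ, hadd, ih, done D hmul, add_zero]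

include hadd hmul in
lemma dinv (a : E) (ha : D a = 0) : D a⁻¹ = 0 := by
  rcases eq_or_ne a 0 with rfl | h
  · simpa using dzero D hadd
  · have h1 := hmul a a⁻¹
    rw [mul_inv_cancel₀ h, done D hmul, ha, mul_zero, add_zero] at h1
    rcases mul_eq_zero.mp h1.symm with h2 | h2
    · exact absurd h2 h
    · exact h2

include hadd in
lemma diter_zero (n : ℕ) : D^[n] 0 = 0 := by
  induction n with
  | zero => rfl
  | succ k ih => rw [Function.iterate_succ_apply, dzero D hadd, ih]

include hadd in
lemma diter_sub (n : ℕ) (a b : E) : D^[n] (a - b) = D^[n] a - D^[n] b := by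
  induction n generalizing a b with
  | zero => rfl
  | succ k ih =>
    simp only [Function.iterate_succ_apply]
    rw [dsub D hadd, ih]

include hmul in
lemma dconstmul (c a : E) (hc : D c = 0) : D (c * a) = c * D a := by
  rw [hmul, hc, mul_zero, add_zero]

include hadd hmul in
lemma diter_pow (y : E) (hy : D y = 1) :
    ∀ (n : ℕ) (c : E), D c = 0 → D^[n] (c * y ^ n) = (n.factorial : E) * c := by
  intro n
  induction n with
  | zero => intro c hc; simp
  | succ k ih =>
    intro c hc
    have step : D (c * y ^ (k + 1)) = (((k+1 : ℕ) : E) * c) * y ^ k := by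
      rw [dconstmul D hmul _ _ hc]
      have : D (y ^ (k+1)) = ((k+1 : ℕ) : E) * y ^ k := by
        clear ih
        induction k with
        | zero => simpa using hy
        | succ l ihl =>
          rw [pow_succ, hmul, ihl, hy, mul_one]
          push_cast
          ring
      rw [this]; ring
    have hc' : D (((k+1 : ℕ) : E) * c) = 0 := by
      rw [dconstmul D hmul _ _ (dnat D hadd hmul _), hc, mul_zero]
    rw [Function.iterate_succ_apply, step, ih _ hc', Nat.factorial_succ]
    push_cast; ring

end DerivHelpers
section Part2
variable {E : Type*} [Field E]

/-- The common kernel of a family of derivations (restricted to indices satisfying `Q`)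
is a subfield. -/
def kerSubfield {ι : Type*} (D : ι → E → E) (Q : ι → Prop)
    (hadd : ∀ i a b, D i (a + b) = D i a + D i b)
    (hmul : ∀ i a b, D i (a * b) = a * D i b + b * D i a) : Subfield E where
  carrier := {a | ∀ i, Q i → D i a = 0}
  zero_mem' := fun i _ => dzero (D i) (hadd i)
  one_mem' := fun i _ => done (D i) (hmul i)
  add_mem' := by
    intro a b ha hb i hi
    rw [hadd i, ha i hi, hb i hi, add_zero]
  neg_mem' := by
    intro a ha i hi
    rw [dneg (D i) (hadd i), ha i hi, neg_zero]
  mul_mem' := by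
    intro a b ha hb i hi
    rw [hmul i, ha i hi, hb i hi, mul_zero, mul_zero, add_zero]
  inv_mem' := by
    intro a ha i hi
    exact dinv (D i) (hadd i) (hmul i) a (ha i hi)

lemma mem_kerSubfield {ι : Type*} {D : ι → E → E} {Q : ι → Prop}
    {hadd : ∀ i a b, D i (a + b) = D i a + D i b}
    {hmul : ∀ i a b, D i (a * b) = a * D i b + b * D i a} {a : E} :
    a ∈ kerSubfield D Q hadd hmul ↔ ∀ i, Q i → D i a = 0 := Iff.rfl

lemma diter_mem {S : Subfield E} (D : E → E) (hmaps : ∀ a ∈ S, D a ∈ S)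
    (a : E) (haS : a ∈ S) : ∀ n, D^[n] a ∈ S := by
  intro n
  induction n with
  | zero => simpa using haS
  | succ l ihl => rw [Function.iterate_succ_apply']; exact hmaps _ ihl

/-- Key "Taylor expansion" lemma: if `D^[n] a = 0` with `n ≤ p`, then `a` lies in the
subring generated by `A ∩ ker D` and `y`, where `D y = 1`. -/
lemma mem_closure_of_iterate {p : ℕ} (hp : p.Prime) [CharP E p]
    (A : Subfield E) (D : E → E)
    (hadd : ∀ a b, D (a + b) = D a + D b)
    (hmul : ∀ a b, D (a * b) = a * D b + b * D a)
    (hmaps : ∀ a ∈ A, D a ∈ A) (y : E) (hyA : y ∈ A) (hy : D y = 1) :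
    ∀ n, n ≤ p → ∀ a ∈ A, D^[n] a = 0 →
      a ∈ Subring.closure (((A : Set E) ∩ {x | D x = 0}) ∪ {y}) := by
  intro n
  induction n with
  | zero =>
    intro _ a _ ha
    simp only [Function.iterate_zero, id_eq] at ha
    rw [ha]
    exact Subring.zero_mem _
  | succ k ih =>
    intro hkp a haA ha
    have hklt : k < p := hkp
    have hfac : ((k.factorial : ℕ) : E) ≠ 0 := by
      rw [Ne, CharP.cast_eq_zero_iff E p]
      rw [Nat.Prime.dvd_factorial hp]
      omega
    have hDka : D^[k] a ∈ A := diter_mem D hmaps a haA k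
    set c : E := ((k.factorial : ℕ) : E)⁻¹ * D^[k] a with hc_def
    have hDc : D c = 0 := by
      have h1 : D (((k.factorial : ℕ) : E)⁻¹) = 0 :=
        dinv D hadd hmul _ (dnat D hadd hmul _)
      have h2 : D (D^[k] a) = 0 := by
        rw [← Function.iterate_succ_apply' D k a]
        exact ha
      rw [hc_def, hmul, h1, h2, mul_zero, mul_zero, add_zero]
    have hcA : c ∈ A := A.mul_mem (A.inv_mem (natCast_mem A _)) hDka
    set a' : E := a - c * y ^ k with ha'_def
    have ha'A : a' ∈ A := A.sub_mem haA (A.mul_mem hcA (A.pow_mem hyA k))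
    have ha' : D^[k] a' = 0 := by
      rw [ha'_def, diter_sub D hadd, diter_pow D hadd hmul y hy k c hDc, hc_def,
        ← mul_assoc, mul_inv_cancel₀ hfac, one_mul, sub_self]
    have h1 := ih (by omega) a' ha'A ha'
    have hc_mem : c ∈ Subring.closure (((A : Set E) ∩ {x | D x = 0}) ∪ {y}) :=
      Subring.subset_closure (Or.inl ⟨hcA, hDc⟩)
    have hy_mem : y ∈ Subring.closure (((A : Set E) ∩ {x | D x = 0}) ∪ {y}) :=
      Subring.subset_closure (Or.inr rfl)
    have : a = a' + c * y ^ k := by rw [ha'_def]; ring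
    rw [this]
    exact Subring.add_mem _ h1 (Subring.mul_mem _ hc_mem (Subring.pow_mem _ hy_mem k))

/-- The classical trick: a nilpotent derivation which is nonzero somewhere on a stable
subfield takes the value 1 on that subfield. -/
lemma exists_d_eq_one {p : ℕ} (hp : p.Prime) (D : E → E)
    (hadd : ∀ a b, D (a + b) = D a + D b)
    (hmul : ∀ a b, D (a * b) = a * D b + b * D a)
    (hnil : ∀ a, D^[p] a = 0)
    (K : Subfield E) (hmaps : ∀ a ∈ K, D a ∈ K)
    (a : E) (haK : a ∈ K) (ha : D a ≠ 0) :
    ∃ x ∈ K, D x = 1 := by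
  classical
  set P : ℕ → Prop := fun k => D^[k] a ≠ 0 with hP
  set k : ℕ := Nat.findGreatest P p with hk_def
  have hP1 : P 1 := by simpa [hP] using ha
  have h1k : 1 ≤ k := Nat.le_findGreatest hp.one_lt.le hP1
  have hk : D^[k] a ≠ 0 := Nat.findGreatest_spec (P := P) hp.one_lt.le hP1
  have hkp : k < p := by
    have hle : k ≤ p := Nat.findGreatest_le p
    rcases lt_or_eq_of_le hle with h | h
    · exact h
    · exfalso; apply hk; rw [h]; exact hnil a
  have hk1 : D^[k + 1] a = 0 := by
    by_contra hne
    exact (Nat.findGreatest_is_greatest (P := P) (n := p) (k := k + 1) (by omega) (by omega)) hne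
  set z : E := D^[k] a with hz_def
  have hiter_mem : ∀ n, D^[n] a ∈ K := diter_mem D hmaps a haK
  have hDz : D z = 0 := by rw [hz_def, ← Function.iterate_succ_apply' D k a]; exact hk1
  refine ⟨D^[k - 1] a * z⁻¹, K.mul_mem (hiter_mem _) (K.inv_mem (hiter_mem _)), ?_⟩
  have hstep : D (D^[k - 1] a) = z := by
    rw [hz_def, ← Function.iterate_succ_apply' D (k - 1) a]
    congr 1
    omega
  rw [hmul, dinv D hadd hmul _ hDz, mul_zero, zero_add, hstep, inv_mul_cancel₀ hk]

end Part2
section Part3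

lemma main_abstract (p : ℕ) (hp : p.Prime) (M : ℕ) :
    ∀ (E : Type) [Field E] [CharP E p] (D : Fin M → E → E),
      (∀ i a b, D i (a + b) = D i a + D i b) →
      (∀ i a b, D i (a * b) = a * D i b + b * D i a) →
      (∀ i i' a, D i (D i' a) = D i' (D i a)) →
      (∀ i a, (D i)^[p] a = 0) →
      (∀ c : Fin M → E, (∀ a, ∑ i, c i * D i a = 0) → ∀ i, c i = 0) →
      ∃ x : Fin M → E, ∀ i i', D i (x i') = if i = i' then 1 else 0 := by
  induction M with
  | zero =>
    intro E _ _ D _ _ _ _ _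
    exact ⟨fun _ => 0, fun i => i.elim0⟩
  | succ M IH =>
    intro E _ _ D hadd hmul hcomm hnil hind
    have key : ∀ j : Fin (M + 1), ∃ xj : E, ∀ i, D i xj = if i = j then 1 else 0 := by
      intro j
      set D' : Fin M → E → E := fun i => D (j.succAbove i) with hD'
      have hadd' : ∀ i a b, D' i (a + b) = D' i a + D' i b := fun i => hadd _
      have hmul' : ∀ i a b, D' i (a * b) = a * D' i b + b * D' i a := fun i => hmul _
      have hcomm' : ∀ i i' a, D' i (D' i' a) = D' i' (D' i a) := fun i i' => hcomm _ _
      have hnil' : ∀ i a, (D' i)^[p] a = 0 := fun i => hnil _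
      have hind' : ∀ c : Fin M → E, (∀ a, ∑ i, c i * D' i a = 0) → ∀ i, c i = 0 := by
        intro c hc
        have h0 : ∀ i', (j.insertNth 0 c : Fin (M + 1) → E) i' = 0 := by
          apply hind
          intro a
          rw [Fin.sum_univ_succAbove (fun i' => (j.insertNth 0 c : Fin (M + 1) → E) i' * D i' a) j]
          simp only [Fin.insertNth_apply_same, Fin.insertNth_apply_succAbove, zero_mul, zero_add]
          exact hc a
        intro i
        have h1 := h0 (j.succAbove i)
        rwa [Fin.insertNth_apply_succAbove] at h1
      obtain ⟨y, hy⟩ := IH E D' hadd' hmul' hcomm' hnil' hind'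
      set Kset : Set E := {a | ∀ i, D' i a = 0} with hKset
      set Y : Set E := Set.range y with hY
      -- spanning
      have span : ∀ s : Finset (Fin M), ∀ a : E, (∀ i, i ∉ s → D' i a = 0) →
          a ∈ Subring.closure (Kset ∪ Y) := by
        intro s
        induction s using Finset.induction_on with
        | empty =>
          intro a ha
          exact Subring.subset_closure (Or.inl (fun i => ha i (Finset.notMem_empty i)))
        | @insert t s htns ihs =>
          intro a ha
          set A : Subfield E := kerSubfield D' (fun i => i ∉ insert t s) hadd' hmul' with hA
          have hmapsA : ∀ b ∈ A, D' t b ∈ A := by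
            intro b hb i hi
            rw [hcomm' i t b, hb i hi, dzero (D' t) (hadd' t)]
          have hytA : y t ∈ A := by
            intro i hi
            rw [hy i t, if_neg]
            intro h
            exact hi (h ▸ Finset.mem_insert_self t s)
          have haA : a ∈ A := ha
          have hyt1 : D' t (y t) = 1 := by simpa using hy t t
          have h1 := mem_closure_of_iterate hp A (D' t) (hadd' t) (hmul' t) hmapsA
            (y t) hytA hyt1 p le_rfl a haA (hnil' t a)
          have hsub : Subring.closure (((A : Set E) ∩ {x | D' t x = 0}) ∪ {y t}) ≤
              Subring.closure (Kset ∪ Y) := by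
            rw [Subring.closure_le]
            rintro b (⟨hbA, hbk⟩ | rfl)
            · apply ihs b
              intro i hi
              by_cases hit : i = t
              · subst hit; exact hbk
              · exact hbA i (by
                  intro hmem
                  rcases Finset.mem_insert.mp hmem with h | h
                  · exact hit h
                  · exact hi h)
            · exact Subring.subset_closure (Or.inr ⟨t, rfl⟩)
          exact hsub h1
      have span_all : ∀ a : E, a ∈ Subring.closure (Kset ∪ Y) :=
        fun a => span Finset.univ a (fun i hi => absurd (Finset.mem_univ i) hi)
      -- existence of an element of the common kernel on which D j is nonzero
      have hex : ∃ a : E, (∀ i, D' i a = 0) ∧ D j a ≠ 0 := by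
        by_contra hcon
        push_neg at hcon
        set Δ : E → E := fun a => D j a - ∑ i, D j (y i) * D' i a with hΔ
        have hΔadd : ∀ a b, Δ (a + b) = Δ a + Δ b := by
          intro a b
          simp only [hΔ, hadd j, hadd']
          rw [show (∑ i, D j (y i) * (D' i a + D' i b)) =
            (∑ i, D j (y i) * D' i a) + ∑ i, D j (y i) * D' i b by
              rw [← Finset.sum_add_distrib]
              exact Finset.sum_congr rfl fun i _ => by ring]
          ring
        have hΔmul : ∀ a b, Δ (a * b) = a * Δ b + b * Δ a := by
          intro a b
          simp only [hΔ, hmul j, hmul']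
          rw [show (∑ i, D j (y i) * (a * D' i b + b * D' i a)) =
            a * (∑ i, D j (y i) * D' i b) + b * ∑ i, D j (y i) * D' i a by
              rw [Finset.mul_sum, Finset.mul_sum, ← Finset.sum_add_distrib]
              exact Finset.sum_congr rfl fun i _ => by ring]
          ring
        have hΔvanish : ∀ a : E, Δ a = 0 := by
          intro a
          have hmem := span_all a
          induction hmem using Subring.closure_induction with
          | mem x hx =>
            rcases hx with hK | hYx
            · have h1 : D j x = 0 := hcon x hK
              have h2 : ∀ i, D' i x = 0 := hK
              simp only [hΔ, h1]
              rw [Finset.sum_congr rfl fun i _ => by rw [h2 i, mul_zero]]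
              simp
            · obtain ⟨i0, rfl⟩ := hYx
              have hsum : (∑ i, D j (y i) * D' i (y i0)) = D j (y i0) := by
                rw [Finset.sum_eq_single i0]
                · rw [hy, if_pos rfl, mul_one]
                · intro b _ hb
                  rw [hy, if_neg hb, mul_zero]
                · intro h
                  exact absurd (Finset.mem_univ i0) h
              simp only [hΔ, hsum, sub_self]
          | zero => exact dzero Δ hΔadd
          | one => exact done Δ hΔmul
          | add u v hu hv hu' hv' => rw [hΔadd, hu', hv', add_zero]
          | neg u hu hu' => rw [dneg Δ hΔadd, hu', neg_zero]
          | mul u v hu hv hu' hv' => rw [hΔmul, hu', hv', mul_zero, mul_zero, add_zero]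
        -- build the linear dependence, contradiction with hind
        set c : Fin (M + 1) → E := j.insertNth (-1) (fun i => D j (y i)) with hc
        have hczero : ∀ i', c i' = 0 := by
          apply hind
          intro a
          rw [Fin.sum_univ_succAbove (fun i' => c i' * D i' a) j]
          simp only [hc, Fin.insertNth_apply_same, Fin.insertNth_apply_succAbove]
          have := hΔvanish a
          simp only [hΔ, sub_eq_zero] at this
          rw [← this]
          ring
        have := hczero j
        rw [hc, Fin.insertNth_apply_same] at this
        exact absurd this (by norm_num)
      obtain ⟨a, haK, haj⟩ := hex
      set K : Subfield E := kerSubfield D' (fun _ => True) hadd' hmul' with hK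
      have hmapsK : ∀ b ∈ K, D j b ∈ K := by
        intro b hb i _
        show D (j.succAbove i) (D j b) = 0
        have hb' : D (j.succAbove i) b = 0 := hb i trivial
        rw [hcomm (j.succAbove i) j b, hb', dzero (D j) (hadd j)]
      obtain ⟨x, hxK, hx1⟩ := exists_d_eq_one hp (D j) (hadd j) (hmul j) (hnil j) K hmapsK
        a (fun i _ => haK i) haj
      refine ⟨x, ?_⟩
      intro i
      by_cases hij : i = j
      · subst hij
        rw [if_pos rfl]
        exact hx1
      · rw [if_neg hij]
        obtain ⟨i0, hi0⟩ := Fin.exists_succAbove_eq hij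
        rw [← hi0]
        exact hxK i0 trivial
    choose x hx using key
    exact ⟨x, fun i i' => hx i' i⟩

end Part3
section Part4

lemma multiChoose_single_same {m : ℕ} (i : Fin m) (k : ℕ) :
    multiChoose (Finsupp.single i 1) (Finsupp.single i k) = k + 1 := by
  unfold multiChoose
  rw [Finset.prod_eq_single i]
  · simp [Finsupp.single_eq_same, Nat.choose_one_right, Nat.add_comm]
  · intro b _ hb
    simp [Finsupp.single_eq_of_ne' (Ne.symm hb)]
  · intro h
    exact absurd (Finset.mem_univ i) h

lemma multiChoose_single_ne {m : ℕ} {i j : Fin m} (hij : i ≠ j) :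
    multiChoose (Finsupp.single i 1) (Finsupp.single j 1) = 1 := by
  unfold multiChoose
  apply Finset.prod_eq_one
  intro μ _
  rcases eq_or_ne μ i with rfl | hi
  · simp [Finsupp.single_eq_same, Finsupp.single_eq_of_ne' hij.symm]
  · rcases eq_or_ne μ j with rfl | hj
    · simp [Finsupp.single_eq_same, Finsupp.single_eq_of_ne' (Ne.symm hi)]
    · simp [Finsupp.single_eq_of_ne' (Ne.symm hi), Finsupp.single_eq_of_ne' (Ne.symm hj)]

variable {m : ℕ} {F : Type} [Field F]

lemma thD_add (θ : IterativeDerivation m F) (k : Fin m →₀ ℕ) (a b : F) :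
    θ.D k (a + b) = θ.D k a + θ.D k b := by
  simp [IterativeDerivation.D, map_add]

lemma thD_nsmul (θ : IterativeDerivation m F) (k : Fin m →₀ ℕ) (n : ℕ) (a : F) :
    θ.D k (n • a) = n • θ.D k a := by
  induction n with
  | zero => simp [IterativeDerivation.D]
  | succ l ih => rw [succ_nsmul, succ_nsmul, thD_add, ih]

lemma thD_mul (θ : IterativeDerivation m F) (i : Fin m) (a b : F) :
    θ.D (Finsupp.single i 1) (a * b) =
      a * θ.D (Finsupp.single i 1) b + b * θ.D (Finsupp.single i 1) a := by
  unfold IterativeDerivation.D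
  rw [map_mul, MvPowerSeries.coeff_mul, Finsupp.antidiagonal_single, Finset.sum_map,
    show (Finset.HasAntidiagonal.antidiagonal 1 : Finset (ℕ × ℕ)) = {(0, 1), (1, 0)} by decide,
    Finset.sum_insert (by decide), Finset.sum_singleton]
  simp only [Function.Embedding.coe_prodMap, Function.Embedding.coeFn_mk, Prod.map_apply,
    Finsupp.single_zero]
  rw [θ.coeff_zero a, θ.coeff_zero b]
  ring

lemma thD_comm (θ : IterativeDerivation m F) (i i' : Fin m) (a : F) :
    θ.D (Finsupp.single i 1) (θ.D (Finsupp.single i' 1) a) =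
      θ.D (Finsupp.single i' 1) (θ.D (Finsupp.single i 1) a) := by
  rcases eq_or_ne i i' with rfl | hij
  · rfl
  · simp only [IterativeDerivation.D]
    rw [θ.iterate (Finsupp.single i 1) (Finsupp.single i' 1) a,
      θ.iterate (Finsupp.single i' 1) (Finsupp.single i 1) a,
      multiChoose_single_ne hij, multiChoose_single_ne hij.symm, add_comm]

lemma thD_iter (θ : IterativeDerivation m F) (i : Fin m) (k : ℕ) (a : F) :
    (θ.D (Finsupp.single i 1))^[k] a = k.factorial • θ.D (Finsupp.single i k) a := by
  induction k with
  | zero =>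
    simp only [Function.iterate_zero, id_eq, Nat.factorial_zero, one_smul, Finsupp.single_zero]
    exact (θ.coeff_zero a).symm
  | succ k ih =>
    rw [Function.iterate_succ_apply', ih, thD_nsmul]
    have hs : Finsupp.single i 1 + Finsupp.single i k = Finsupp.single i (k + 1) := by
      rw [← Finsupp.single_add, Nat.add_comm]
    have h1 : θ.D (Finsupp.single i 1) (θ.D (Finsupp.single i k) a) =
        (k + 1) • θ.D (Finsupp.single i (k + 1)) a := by
      simp only [IterativeDerivation.D]
      rw [θ.iterate (Finsupp.single i 1) (Finsupp.single i k) a, multiChoose_single_same, hs]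
    rw [h1, smul_smul, Nat.factorial_succ, Nat.mul_comm]

end Part4
/-- If `F` is a field of characteristic `p > 0` with a non-degenerate `m`-variate
iterative derivation `θ`, then there exist `x_1,…,x_m ∈ F` with
`θ^{(e_i)}(x_j) = δ_{ij}` for all `i, j`. -/
theorem exists_dual_elements
    (m p : ℕ) (hp : p.Prime) (F : Type) [Field F] [CharP F p]
    (θ : IterativeDerivation m F) (hθ : θ.Nondegenerate) :
    ∃ x : Fin m → F, ∀ i j : Fin m,
      θ.D (Finsupp.single i 1) (x j) = if i = j then 1 else 0 := by
  have hnil : ∀ (i : Fin m) (a : F), (θ.D (Finsupp.single i 1))^[p] a = 0 := by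
    intro i a
    rw [thD_iter θ i p a, nsmul_eq_mul]
    have : ((p.factorial : ℕ) : F) = 0 :=
      (CharP.cast_eq_zero_iff F p _).mpr (Nat.dvd_factorial hp.pos le_rfl)
    rw [this, zero_mul]
  have hind : ∀ c : Fin m → F,
      (∀ a, ∑ i, c i * θ.D (Finsupp.single i 1) a = 0) → ∀ i, c i = 0 := by
    intro c hc
    have h := Fintype.linearIndependent_iff.mp hθ c
    apply h
    funext a
    have := hc a
    simpa [Finset.sum_apply, Pi.smul_apply, smul_eq_mul] using this
  obtain ⟨x, hx⟩ := main_abstract p hp m F (fun i => θ.D (Finsupp.single i 1))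
    (fun i => thD_add θ _) (fun i => thD_mul θ i) (fun i i' => thD_comm θ i i')
    hnil hind
  exact ⟨x, hx⟩
end

section
/- Let (F,θ) be an ID-field of characteristic p > 0 and let E be an ID-field extension of F. If R_1 ⊆ E and R_2 ⊆ E are F-subalgebras, stable under the iterative derivation of E, such that R_1 is a PPV-ring over F for some IDE θ(y) = A·y with Quot(R_1) = E, and R_2 is a PPV-ring over F for some (possibly different) IDE θ(y) = A'·y with Quot(R_2) = E, then R_1 = R_2. In other words, the PPV-ring inside a PPV-field is unique and independent of the particular IDE. -/
open scoped TensorProduct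

/-- An ID-ring extension: the iterative derivation `θR` on `R` restricts to `θF` on `F`
(via the algebra map). -/
def IterativeDerivation.Extends {m : ℕ} {F R : Type*} [CommRing F] [CommRing R] [Algebra F R]
    (θF : IterativeDerivation m F) (θR : IterativeDerivation m R) : Prop :=
  ∀ (k : Fin m →₀ ℕ) (f : F), θR.D k (algebraMap F R f) = algebraMap F R (θF.D k f)

/-- `R` is ID-simple: no nontrivial ideals stable under all the `θ^{(k)}`. -/
def IterativeDerivation.IDSimple {m : ℕ} {R : Type*} [CommRing R]
    (θ : IterativeDerivation m R) : Prop :=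
  ∀ I : Ideal R, (∀ (k : Fin m →₀ ℕ), ∀ x ∈ I, θ.D k x ∈ I) → I = ⊥ ∨ I = ⊤

/-- The coefficient matrices `A_k` of an iterative differential equation `θ(y) = A·y`
over `(F, θ)`: `A_0 = 1` and
`binom(k+l,l)·A_{k+l} = Σ_{i+j=l} θ^{(i)}(A_k)·A_j` for all `k, l`. -/
def IsIDE {m n : ℕ} {F : Type*} [Field F] (θ : IterativeDerivation m F)
    (A : (Fin m →₀ ℕ) → Matrix (Fin n) (Fin n) F) : Prop :=
  A 0 = 1 ∧
  ∀ k l : Fin m →₀ ℕ,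
    multiChoose l k • A (k + l) =
      ∑ ij ∈ Finset.HasAntidiagonal.antidiagonal l, (A k).map (θ.D ij.1) * A ij.2

/-- `Y ∈ GL_n(R)` is a fundamental solution matrix for the IDE `θ(y) = A·y`:
`θ^{(k)}(Y) = A_k·Y` (entrywise) for all `k`. -/
def IsFundamentalMatrix {m n : ℕ} {F R : Type*} [Field F] [CommRing R] [Algebra F R]
    (θR : IterativeDerivation m R) (A : (Fin m →₀ ℕ) → Matrix (Fin n) (Fin n) F)
    (Y : Matrix (Fin n) (Fin n) R) : Prop :=
  IsUnit Y.det ∧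
  ∀ k : Fin m →₀ ℕ, Y.map (θR.D k) = (A k).map (algebraMap F R) * Y

/-- Condition (4) of a PPV-ring: the constants of `R` are exactly (the images of) the
constants of `F`. -/
def ConstantsEq {m : ℕ} {F R : Type*} [CommRing F] [CommRing R] [Algebra F R]
    (θF : IterativeDerivation m F) (θR : IterativeDerivation m R) : Prop :=
  ∀ r : R, (∀ k : Fin m →₀ ℕ, k ≠ 0 → θR.D k r = 0) →
    ∃ f : F, (∀ k : Fin m →₀ ℕ, k ≠ 0 → θF.D k f = 0) ∧ algebraMap F R f = r

/-- `(R, θR)` is a pseudo Picard–Vessiot ring over `(F, θF)` for the IDE given by `A`: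
it is ID-simple, has a fundamental solution matrix `Y` which together with `det(Y)⁻¹`
generates `R` as an `F`-algebra, and has the same constants as `F`. -/
def IsPPVRing {m n : ℕ} {F R : Type*} [Field F] [CommRing R] [Algebra F R]
    (θF : IterativeDerivation m F) (θR : IterativeDerivation m R)
    (A : (Fin m →₀ ℕ) → Matrix (Fin n) (Fin n) F) : Prop :=
  θF.Extends θR ∧ θR.IDSimple ∧
  (∃ Y : Matrix (Fin n) (Fin n) R, IsFundamentalMatrix θR A Y ∧
    Algebra.adjoin F
      ((Set.range fun ij : Fin n × Fin n => Y ij.1 ij.2) ∪ {Ring.inverse Y.det}) = ⊤) ∧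
  ConstantsEq θF θR

/-- `S` (an `F`-subalgebra of the ID-field `E`, stable under the iterative derivation of
`E`) is a PPV-ring over `F` for the IDE given by `A`: it is stable under the derivation,
ID-simple, contains a fundamental solution matrix `Y` which together with `det(Y)⁻¹`
generates `S` as an `F`-algebra, and its constants are exactly the constants of `F`. -/
def IsPPVSubalgebra {m n : ℕ} {F E : Type*} [Field F] [Field E] [Algebra F E]
    (θF : IterativeDerivation m F) (θE : IterativeDerivation m E)
    (S : Subalgebra F E) (A : (Fin m →₀ ℕ) → Matrix (Fin n) (Fin n) F) : Prop :=
  (∀ (k : Fin m →₀ ℕ), ∀ x ∈ S, θE.D k x ∈ S) ∧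
  (∀ I : Ideal S,
    (∀ (k : Fin m →₀ ℕ) (x : S), x ∈ I → ∀ y : S, (y : E) = θE.D k (x : E) → y ∈ I) →
      I = ⊥ ∨ I = ⊤) ∧
  (∃ Y : Matrix (Fin n) (Fin n) E,
    (∀ i j : Fin n, Y i j ∈ S) ∧ Y.det ≠ 0 ∧ Y.det⁻¹ ∈ S ∧
    (∀ k : Fin m →₀ ℕ, Y.map (θE.D k) = (A k).map (algebraMap F E) * Y) ∧
    Algebra.adjoin F
      ((Set.range fun ij : Fin n × Fin n => Y ij.1 ij.2) ∪ {Y.det⁻¹}) = S) ∧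
  (∀ x ∈ S, (∀ k : Fin m →₀ ℕ, k ≠ 0 → θE.D k x = 0) →
    ∃ f : F, (∀ k : Fin m →₀ ℕ, k ≠ 0 → θF.D k f = 0) ∧ algebraMap F E f = x)

/-- The quotient field of a subset `S` of a field `E`, as a subset of `E`. -/
def quotSet {E : Type*} [Field E] (S : Set E) : Set E :=
  {e : E | ∃ r ∈ S, ∃ s ∈ S, s ≠ 0 ∧ e = r / s}

section Aux

variable {m : ℕ} {E : Type*} [CommRing E]

lemma aux_multiChoose_zero_left {m : ℕ} (l : Fin m →₀ ℕ) : multiChoose 0 l = 1 := by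
  unfold multiChoose; simp

lemma aux_D_zero (θ : IterativeDerivation m E) (r : E) : θ.D 0 r = r :=
  θ.coeff_zero r

lemma aux_D_D (θ : IterativeDerivation m E) (i j : Fin m →₀ ℕ) (r : E) :
    θ.D i (θ.D j r) = multiChoose i j • θ.D (i + j) r :=
  θ.iterate i j r

lemma aux_D_mul (θ : IterativeDerivation m E) (k : Fin m →₀ ℕ) (a b : E) :
    θ.D k (a * b) = ∑ ij ∈ Finset.HasAntidiagonal.antidiagonal k, θ.D ij.1 a * θ.D ij.2 b := by
  unfold IterativeDerivation.D
  rw [map_mul, MvPowerSeries.coeff_mul]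

/-- total degree of a multi-index -/
def fdeg {m : ℕ} (k : Fin m →₀ ℕ) : ℕ := ∑ μ : Fin m, k μ

lemma aux_fdeg_add {m : ℕ} (i j : Fin m →₀ ℕ) : fdeg (i + j) = fdeg i + fdeg j := by
  simp [fdeg, Finsupp.add_apply, Finset.sum_add_distrib]

lemma aux_fdeg_pos {m : ℕ} {j : Fin m →₀ ℕ} (h : j ≠ 0) : 0 < fdeg j := by
  rcases Finsupp.ne_iff.mp h with ⟨μ, hμ⟩
  simp only [Finsupp.coe_zero, Pi.zero_apply] at hμ
  calc 0 < j μ := Nat.pos_of_ne_zero hμ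
    _ ≤ fdeg j := Finset.single_le_sum (fun _ _ => Nat.zero_le _) (Finset.mem_univ μ)

end Aux

section Mem

variable {m : ℕ} {F E : Type*} [Field F] [Field E] [Algebra F E]

lemma aux_mem_of_denom (θE : IterativeDerivation m E) (R : Subalgebra F E)
    (hstab : ∀ (k : Fin m →₀ ℕ), ∀ x ∈ R, θE.D k x ∈ R)
    (hsimp : ∀ I : Ideal R,
      (∀ (k : Fin m →₀ ℕ) (x : R), x ∈ I → ∀ y : R, (y : E) = θE.D k (x : E) → y ∈ I) →
        I = ⊥ ∨ I = ⊤)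
    (x d : E) (hd : d ∈ R) (hd0 : d ≠ 0)
    (h : ∀ k : Fin m →₀ ℕ, d * θE.D k x ∈ R) : x ∈ R := by
  -- key inductive claim
  have claim : ∀ N : ℕ, ∀ k : Fin m →₀ ℕ, fdeg k = N → ∀ r : E,
      (∀ l : Fin m →₀ ℕ, r * θE.D l x ∈ R) → ∀ l : Fin m →₀ ℕ,
      θE.D k r * θE.D l x ∈ R := by
    intro N
    induction N using Nat.strong_induction_on with
    | _ N IH =>
      intro k hk r hr l
      have hmem : θE.D k (r * θE.D l x) ∈ R := hstab k _ (hr l)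
      rw [aux_D_mul θE k r (θE.D l x)] at hmem
      have hk0 : ((k, 0) : (Fin m →₀ ℕ) × (Fin m →₀ ℕ)) ∈ Finset.HasAntidiagonal.antidiagonal k := by
        simp
      rw [← Finset.add_sum_erase _ _ hk0] at hmem
      have hterm : θE.D (k, (0 : Fin m →₀ ℕ)).1 r * θE.D (k, (0 : Fin m →₀ ℕ)).2 (θE.D l x)
          = θE.D k r * θE.D l x := by
        simp only [aux_D_D θE 0 l x, aux_multiChoose_zero_left, one_smul, zero_add]
      rw [hterm] at hmem
      have hrest : ∑ ij ∈ (Finset.HasAntidiagonal.antidiagonal k).erase (k, 0),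
          θE.D ij.1 r * θE.D ij.2 (θE.D l x) ∈ R := by
        apply Subalgebra.sum_mem
        intro ij hij
        have hij' := Finset.mem_of_mem_erase hij
        rw [Finset.HasAntidiagonal.mem_antidiagonal] at hij'
        have hne : ij ≠ (k, 0) := Finset.ne_of_mem_erase hij
        have hj0 : ij.2 ≠ 0 := by
          intro h0
          apply hne
          have : ij.1 = k := by rw [← hij', h0, add_zero]
          exact Prod.ext this h0
        have hlt : fdeg ij.1 < N := by
          have : fdeg ij.1 + fdeg ij.2 = N := by rw [← aux_fdeg_add, hij', hk]
          have := aux_fdeg_pos hj0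
          omega
        rw [aux_D_D θE ij.2 l x, nsmul_eq_mul, ← mul_assoc, mul_comm (θE.D ij.1 r),
          mul_assoc]
        exact Subalgebra.mul_mem R (Subalgebra.natCast_mem R _)
          (IH _ hlt ij.1 rfl r hr (ij.2 + l))
      have := Subalgebra.sub_mem R hmem hrest
      simpa using this
  -- the stable ideal
  let I : Ideal R :=
    { carrier := {r : R | ∀ l : Fin m →₀ ℕ, (r : E) * θE.D l x ∈ R}
      add_mem' := by
        intro a b ha hb l
        push_cast
        rw [add_mul]
        exact Subalgebra.add_mem R (ha l) (hb l)
      zero_mem' := by intro l; simpa using R.zero_mem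
      smul_mem' := by
        intro c r hr l
        simp only [smul_eq_mul, Set.mem_setOf_eq, Subalgebra.coe_mul, mul_assoc]
        exact Subalgebra.mul_mem R c.2 (hr l) }
  have hIstab : ∀ (k : Fin m →₀ ℕ) (r : R), r ∈ I → ∀ y : R, (y : E) = θE.D k (r : E) →
      y ∈ I := by
    intro k r hr y hy l
    show (y : E) * θE.D l x ∈ R
    rw [hy]
    exact claim (fdeg k) k rfl (r : E) hr l
  rcases hsimp I hIstab with hbot | htop
  · exfalso
    have hdI : (⟨d, hd⟩ : R) ∈ I := fun l => h l
    rw [hbot] at hdI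
    simp only [Ideal.mem_bot] at hdI
    exact hd0 (by simpa [Subtype.ext_iff] using hdI)
  · have h1 : (1 : R) ∈ I := htop ▸ Submodule.mem_top
    have := h1 0
    simpa [aux_D_zero θE x] using this

end Mem

section Det

open MvPowerSeries

variable {m n : ℕ} {F E : Type*} [Field F] [Field E] [Algebra F E]

lemma aux_D_det_inv (θE : IterativeDerivation m E)
    (A : (Fin m →₀ ℕ) → Matrix (Fin n) (Fin n) F) (hA0 : A 0 = 1)
    (Y : Matrix (Fin n) (Fin n) E) (hdet : Y.det ≠ 0)
    (hY : ∀ k : Fin m →₀ ℕ, Y.map (θE.D k) = (A k).map (algebraMap F E) * Y) :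
    ∃ ε : (Fin m →₀ ℕ) → F,
      ∀ k : Fin m →₀ ℕ, θE.D k (Y.det⁻¹) = algebraMap F E (ε k) * Y.det⁻¹ := by
  classical
  -- the matrix of power series over F
  set AF : Matrix (Fin n) (Fin n) (MvPowerSeries (Fin m) F) :=
    Matrix.of (fun i j => (fun k => A k i j : MvPowerSeries (Fin m) F)) with hAF
  have hAFcoeff : ∀ (k : Fin m →₀ ℕ) (i j : Fin n),
      MvPowerSeries.coeff (R := F) k (AF i j) = A k i j := fun k i j => rfl
  set δ : MvPowerSeries (Fin m) F := AF.det with hδ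
  have hδ0 : constantCoeff (σ := Fin m) (R := F) δ = 1 := by
    rw [hδ, RingHom.map_det, RingHom.mapMatrix_apply]
    have : AF.map (constantCoeff (σ := Fin m) (R := F)) = A 0 := by
      ext i j
      rw [Matrix.map_apply, ← coeff_zero_eq_constantCoeff_apply, hAFcoeff]
    rw [this, hA0, Matrix.det_one]
  set φ : MvPowerSeries (Fin m) F →+* MvPowerSeries (Fin m) E :=
    MvPowerSeries.map (σ := Fin m) (algebraMap F E) with hφ
  -- step 1
  have step1 : Y.map θE.toRingHom = AF.map φ * Y.map (C (σ := Fin m) (R := E)) := by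
    ext i j k
    have hentry : θE.D k (Y i j) = ∑ l : Fin n, algebraMap F E (A k i l) * Y l j := by
      have := congrFun (congrFun (hY k) i) j
      rw [Matrix.map_apply] at this
      rw [this, Matrix.mul_apply]
      simp [Matrix.map_apply]
    rw [Matrix.map_apply]
    calc MvPowerSeries.coeff (R := E) k (θE.toRingHom (Y i j))
        = θE.D k (Y i j) := rfl
      _ = ∑ l : Fin n, algebraMap F E (A k i l) * Y l j := hentry
      _ = MvPowerSeries.coeff (R := E) k ((AF.map φ * Y.map (C (σ := Fin m) (R := E))) i j) := by
          rw [Matrix.mul_apply, map_sum]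
          apply Finset.sum_congr rfl
          intro l _
          rw [Matrix.map_apply, Matrix.map_apply, MvPowerSeries.coeff_mul_C,
            hφ, MvPowerSeries.coeff_map, hAFcoeff]
  -- step 2
  have step2 : θE.toRingHom Y.det = φ δ * C (σ := Fin m) (R := E) Y.det := by
    have e1 : (AF.map ⇑φ).det = φ δ := by
      rw [hδ, RingHom.map_det, RingHom.mapMatrix_apply]
    have e2 : (Y.map ⇑(C (σ := Fin m) (R := E))).det = C (σ := Fin m) (R := E) Y.det := by
      rw [RingHom.map_det, RingHom.mapMatrix_apply]
    rw [RingHom.map_det, RingHom.mapMatrix_apply, step1, Matrix.det_mul, e1, e2]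
  -- step 3
  have hδu : δ⁻¹ * δ = 1 := MvPowerSeries.inv_mul_cancel δ (by rw [hδ0]; exact one_ne_zero)
  have h1 : θE.toRingHom Y.det⁻¹ * θE.toRingHom Y.det = 1 := by
    rw [← map_mul, inv_mul_cancel₀ hdet, map_one]
  have h2 : (φ δ⁻¹ * C (σ := Fin m) (R := E) Y.det⁻¹) * θE.toRingHom Y.det = 1 := by
    rw [step2]
    calc φ δ⁻¹ * C (σ := Fin m) (R := E) Y.det⁻¹ * (φ δ * C (σ := Fin m) (R := E) Y.det)
        = (φ δ⁻¹ * φ δ) * (C (σ := Fin m) (R := E) Y.det⁻¹ * C (σ := Fin m) (R := E) Y.det) := by ring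
      _ = 1 := by
          rw [← map_mul, hδu, map_one, ← map_mul, inv_mul_cancel₀ hdet, map_one, one_mul]
  have step3 : θE.toRingHom Y.det⁻¹ = φ δ⁻¹ * C (σ := Fin m) (R := E) Y.det⁻¹ := by
    calc θE.toRingHom Y.det⁻¹
        = θE.toRingHom Y.det⁻¹ * ((φ δ⁻¹ * C (σ := Fin m) (R := E) Y.det⁻¹) * θE.toRingHom Y.det) := by
          rw [h2, mul_one]
      _ = (θE.toRingHom Y.det⁻¹ * θE.toRingHom Y.det) * (φ δ⁻¹ * C (σ := Fin m) (R := E) Y.det⁻¹) := by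
          ring
      _ = φ δ⁻¹ * C (σ := Fin m) (R := E) Y.det⁻¹ := by rw [h1, one_mul]
  refine ⟨fun k => MvPowerSeries.coeff (R := F) k δ⁻¹, fun k => ?_⟩
  show MvPowerSeries.coeff (R := E) k (θE.toRingHom Y.det⁻¹) = _
  rw [step3, MvPowerSeries.coeff_mul_C, hφ, MvPowerSeries.coeff_map]

end Det

section Glue

variable {m : ℕ} {F E : Type*} [Field F] [Field E] [Algebra F E]

lemma aux_ppv_le {n₁ n₂ : ℕ}
    (θF : IterativeDerivation m F) (θE : IterativeDerivation m E)
    (R₁ R₂ : Subalgebra F E)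
    (A₁ : (Fin m →₀ ℕ) → Matrix (Fin n₁) (Fin n₁) F)
    (A₂ : (Fin m →₀ ℕ) → Matrix (Fin n₂) (Fin n₂) F) (hA₂0 : A₂ 0 = 1)
    (h₁ : IsPPVSubalgebra θF θE R₁ A₁) (h₂ : IsPPVSubalgebra θF θE R₂ A₂)
    (hq₁ : quotSet (R₁ : Set E) = Set.univ) : R₂ ≤ R₁ := by
  classical
  obtain ⟨hstab1, hsimp1, -, -⟩ := h₁
  obtain ⟨-, -, ⟨Y, hYmem, hdet, hinv, hYfund, hadj⟩, -⟩ := h₂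
  have hP : ∀ e : E, ∃ b, b ∈ R₁ ∧ b ≠ 0 ∧ b * e ∈ R₁ := by
    intro e
    have he : e ∈ quotSet (R₁ : Set E) := by rw [hq₁]; trivial
    obtain ⟨a, ha, b, hb, hb0, rfl⟩ := he
    refine ⟨b, hb, hb0, ?_⟩
    rw [mul_comm, div_mul_cancel₀ _ hb0]
    exact ha
  choose b hbmem hb0 hbY using fun ij : Fin n₂ × Fin n₂ => hP (Y ij.1 ij.2)
  set d : E := ∏ ij : Fin n₂ × Fin n₂, b ij with hd
  have hdmem : d ∈ R₁ := Subalgebra.prod_mem R₁ (fun ij _ => hbmem ij)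
  have hd0 : d ≠ 0 := Finset.prod_ne_zero_iff.mpr (fun ij _ => hb0 ij)
  have hdY : ∀ i j : Fin n₂, d * Y i j ∈ R₁ := by
    intro i j
    have hsplit : d = b (i, j) * ∏ ij ∈ Finset.univ.erase (i, j), b ij :=
      (Finset.mul_prod_erase Finset.univ b (Finset.mem_univ (i, j))).symm
    rw [hsplit, mul_right_comm]
    exact Subalgebra.mul_mem R₁ (hbY (i, j))
      (Subalgebra.prod_mem R₁ (fun ij _ => hbmem ij))
  have hent : ∀ i j : Fin n₂, Y i j ∈ R₁ := by
    intro i j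
    refine aux_mem_of_denom θE R₁ hstab1 hsimp1 (Y i j) d hdmem hd0 ?_
    intro k
    have hDk : θE.D k (Y i j) = ∑ l : Fin n₂, algebraMap F E (A₂ k i l) * Y l j := by
      have hf := congrFun (congrFun (hYfund k) i) j
      rw [Matrix.map_apply] at hf
      rw [hf, Matrix.mul_apply]
      simp [Matrix.map_apply]
    rw [hDk, Finset.mul_sum]
    apply Subalgebra.sum_mem
    intro l _
    rw [mul_left_comm]
    exact Subalgebra.mul_mem R₁ (Subalgebra.algebraMap_mem R₁ _) (hdY l j)
  have hdetinv : Y.det⁻¹ ∈ R₁ := by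
    obtain ⟨ε, hε⟩ := aux_D_det_inv θE A₂ hA₂0 Y hdet hYfund
    obtain ⟨c, hc, hc0, hcY⟩ := hP Y.det⁻¹
    refine aux_mem_of_denom θE R₁ hstab1 hsimp1 Y.det⁻¹ c hc hc0 ?_
    intro k
    rw [hε k, mul_left_comm]
    exact Subalgebra.mul_mem R₁ (Subalgebra.algebraMap_mem R₁ _) hcY
  rw [← hadj]
  apply Algebra.adjoin_le
  rintro x (⟨ij, rfl⟩ | rfl)
  · exact hent ij.1 ij.2
  · exact hdetinv

end Glue



/-- Let `E` be a PPV-field over the ID-field `(F, θF)` of characteristic `p > 0`. If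
`R₁, R₂ ⊆ E` are derivation-stable `F`-subalgebras which are PPV-rings over `F` for some
IDEs `θ(y) = A·y` resp. `θ(y) = A'·y`, both with quotient field `E`, then `R₁ = R₂`:
the PPV-ring inside a PPV-field is unique and independent of the particular IDE. -/
theorem ppvRing_unique
    (m n₁ n₂ p : ℕ) (hp : p.Prime)
    (F E : Type) [Field F] [CharP F p] [Field E] [Algebra F E]
    (θF : IterativeDerivation m F) (θE : IterativeDerivation m E)
    (hext : θF.Extends θE)
    (R₁ R₂ : Subalgebra F E)
    (A₁ : (Fin m →₀ ℕ) → Matrix (Fin n₁) (Fin n₁) F) (hA₁ : IsIDE θF A₁)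
    (A₂ : (Fin m →₀ ℕ) → Matrix (Fin n₂) (Fin n₂) F) (hA₂ : IsIDE θF A₂)
    (h₁ : IsPPVSubalgebra θF θE R₁ A₁) (h₂ : IsPPVSubalgebra θF θE R₂ A₂)
    (hq₁ : quotSet (R₁ : Set E) = Set.univ) (hq₂ : quotSet (R₂ : Set E) = Set.univ) :
    R₁ = R₂ :=
  le_antisymm (aux_ppv_le θF θE R₂ R₁ A₂ A₁ hA₁.1 h₂ h₁ hq₂)
    (aux_ppv_le θF θE R₁ R₂ A₁ A₂ hA₂.1 h₁ h₂ hq₁)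
end
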